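/- Let κ₂ > 0 and Ω₁ ∈ (0, 1). Then there exists a unique real w < -1 satisfying w e^w = -Ω₁ e^{-Ω₁}, and the number B* = -Ω₁ / (κ₂ (Ω₁ + w)) is positive and is the unique positive solution of the equation B · ln(1 + 1/(Bκ₂)) = Ω₁/κ₂. Equivalently, B* = (-Ω₁/κ₂)/(Ω₁ + W₋₁(-Ω₁ e^{-Ω₁})), where W₋₁ denotes the branch of the Lambert W function taking values in (-∞, -1]. -/

import Mathlib

open Real


lemma anti_wew : StrictAntiOn (fun w : ℝ => w * Real.exp w) (Set.Iic (-1)) := by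
  apply strictAntiOn_of_deriv_neg (convex_Iic _)
  · fun_prop
  · intro x hx
    rw [interior_Iic] at hx
    have : deriv (fun w : ℝ => w * Real.exp w) x = (1 + x) * Real.exp x := by
      have h : HasDerivAt (fun w : ℝ => w * Real.exp w) (1 * Real.exp x + x * Real.exp x) x :=
        (hasDerivAt_id x).mul (Real.hasDerivAt_exp x)
      rw [h.deriv]; ring
    rw [this]
    have : 1 + x < 0 := by linarith [hx.out]
    exact mul_neg_of_neg_of_pos this (Real.exp_pos x)

lemma log_ratio_deriv (t : ℝ) (ht : 0 < t) :
    HasDerivAt (fun t : ℝ => Real.log (1 + t) / t)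
      ((1 / (1 + t) * t - Real.log (1 + t) * 1) / t ^ 2) t := by
  have h1 : HasDerivAt (fun t : ℝ => 1 + t) 1 t := by
    simpa using (hasDerivAt_id t).const_add 1
  have h2 : HasDerivAt (fun t : ℝ => Real.log (1 + t)) (1 / (1 + t)) t := by
    simpa using h1.log (by linarith)
  exact h2.div (hasDerivAt_id t) (ne_of_gt ht)

lemma anti_logratio : StrictAntiOn (fun t : ℝ => Real.log (1 + t) / t) (Set.Ioi 0) := by
  apply strictAntiOn_of_deriv_neg (convex_Ioi _)
  · intro t ht
    have ht' : (0:ℝ) < t := ht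
    exact ((Real.continuousAt_log (by linarith)).comp (by fun_prop)).continuousWithinAt.div
      continuousWithinAt_id (ne_of_gt ht')
  · intro t ht
    rw [interior_Ioi] at ht
    have ht' : (0:ℝ) < t := ht
    rw [(log_ratio_deriv t ht').deriv]
    have hlt : t / (1 + t) < Real.log (1 + t) := by
      have h := Real.log_lt_sub_one_of_pos (x := 1 / (1 + t)) (by positivity)
        (by intro h; rw [div_eq_one_iff_eq (by linarith)] at h; linarith)
      rw [Real.log_div one_ne_zero (by linarith), Real.log_one] at h
      have : 1 / (1 + t) - 1 = -(t / (1 + t)) := by field_simp; ring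
      rw [this] at h; linarith
    have : 1 / (1 + t) * t - Real.log (1 + t) * 1 < 0 := by
      have : 1 / (1 + t) * t = t / (1 + t) := by ring
      rw [this]; linarith
    exact div_neg_of_neg_of_pos this (by positivity)

lemma tendsto_wew : Filter.Tendsto (fun w : ℝ => w * Real.exp w) Filter.atBot (nhds 0) := by
  have h := (Real.tendsto_pow_mul_exp_neg_atTop_nhds_zero 1).comp Filter.tendsto_neg_atBot_atTop
  have : (fun w : ℝ => w * Real.exp w) = fun w : ℝ => -((-w) ^ 1 * Real.exp (-(-w))) := by
    ext w; ring_nf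
  rw [this]
  simpa using h.neg

/-- Bandwidth part of Theorem 2 of the paper: for `κ₂ > 0` and `Ω₁ ∈ (0,1)` there is a
unique `w < -1` with `w e^w = -Ω₁ e^{-Ω₁}` (the value `W₋₁(-Ω₁ e^{-Ω₁})` of the lower
branch of the Lambert W function), and `B* = -Ω₁/(κ₂(Ω₁ + w))` is positive and is the
unique positive solution of `B ln(1 + 1/(Bκ₂)) = Ω₁/κ₂`. -/
theorem min_bandwidth (κ₂ Ω₁ : ℝ) (hκ₂ : 0 < κ₂) (hΩ₁0 : 0 < Ω₁) (hΩ₁1 : Ω₁ < 1) :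
    (∃! w : ℝ, w < -1 ∧ w * Real.exp w = -Ω₁ * Real.exp (-Ω₁)) ∧
    ∀ w : ℝ, w < -1 → w * Real.exp w = -Ω₁ * Real.exp (-Ω₁) →
      0 < -Ω₁ / (κ₂ * (Ω₁ + w)) ∧
      (-Ω₁ / (κ₂ * (Ω₁ + w))) *
        Real.log (1 + 1 / ((-Ω₁ / (κ₂ * (Ω₁ + w))) * κ₂)) = Ω₁ / κ₂ ∧
      ∀ B : ℝ, 0 < B → B * Real.log (1 + 1 / (B * κ₂)) = Ω₁ / κ₂ →
        B = -Ω₁ / (κ₂ * (Ω₁ + w)) := by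
  have hyneg : -Ω₁ * Real.exp (-Ω₁) < 0 :=
    mul_neg_of_neg_of_pos (by linarith) (Real.exp_pos _)
  -- f(-1) < y
  have hf1 : (-1 : ℝ) * Real.exp (-1) < -Ω₁ * Real.exp (-Ω₁) := by
    have h1 : Ω₁ < Real.exp (Ω₁ - 1) := by
      have := Real.add_one_lt_exp (x := Ω₁ - 1) (by intro h; linarith [sub_eq_zero.mp h])
      linarith
    have h2 : Ω₁ * Real.exp (-Ω₁) < Real.exp (-1) := by
      have h3 : Real.exp (Ω₁ - 1) * Real.exp (-Ω₁) = Real.exp (-1) := by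
        rw [← Real.exp_add]; ring_nf
      calc Ω₁ * Real.exp (-Ω₁) < Real.exp (Ω₁ - 1) * Real.exp (-Ω₁) :=
            mul_lt_mul_of_pos_right h1 (Real.exp_pos _)
        _ = Real.exp (-1) := h3
    linarith
  -- existence of w
  have hex : ∃ w : ℝ, w < -1 ∧ w * Real.exp w = -Ω₁ * Real.exp (-Ω₁) := by
    have hev : ∀ᶠ w in Filter.atBot, -Ω₁ * Real.exp (-Ω₁) < w * Real.exp w :=
      tendsto_wew.eventually (eventually_gt_nhds hyneg)
    obtain ⟨a, ha1, ha2⟩ := (hev.and (Filter.eventually_lt_atBot (-1))).exists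
    have hcont : ContinuousOn (fun w : ℝ => w * Real.exp w) (Set.Icc a (-1)) := by fun_prop
    have hmem : -Ω₁ * Real.exp (-Ω₁) ∈
        Set.Icc ((-1 : ℝ) * Real.exp (-1)) (a * Real.exp a) :=
      ⟨le_of_lt hf1, le_of_lt ha1⟩
    obtain ⟨w, hwmem, hfw⟩ := intermediate_value_Icc' (le_of_lt ha2) hcont hmem
    refine ⟨w, ?_, hfw⟩
    rcases lt_or_eq_of_le hwmem.2 with h | h
    · exact h
    · exfalso
      rw [h] at hfw
      have h2 : (-1 : ℝ) * Real.exp (-1) = -Ω₁ * Real.exp (-Ω₁) := hfw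
      linarith
  constructor
  · obtain ⟨w, hw1, hw2⟩ := hex
    refine ⟨w, ⟨hw1, hw2⟩, ?_⟩
    rintro w' ⟨hw1', hw2'⟩
    exact anti_wew.injOn (Set.mem_Iic.mpr (le_of_lt hw1'))
      (Set.mem_Iic.mpr (le_of_lt hw1)) (hw2'.trans hw2.symm)
  · intro w hw1 hw2
    have hS : Ω₁ + w < 0 := by linarith
    have hSne : Ω₁ + w ≠ 0 := ne_of_lt hS
    have hΩne : Ω₁ ≠ 0 := ne_of_gt hΩ₁0
    have hκne : κ₂ ≠ 0 := ne_of_gt hκ₂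
    have hwneg : w < 0 := by linarith
    have hBpos : 0 < -Ω₁ / (κ₂ * (Ω₁ + w)) :=
      div_pos_of_neg_of_neg (by linarith) (mul_neg_of_pos_of_neg hκ₂ hS)
    -- key log identity
    have hkey : Real.log (-w) - Real.log Ω₁ = -Ω₁ - w := by
      have h1 : (-w) * Real.exp w = Ω₁ * Real.exp (-Ω₁) := by linarith
      have h2 : Real.log ((-w) * Real.exp w) = Real.log (Ω₁ * Real.exp (-Ω₁)) := by rw [h1]
      rw [Real.log_mul (by linarith) (ne_of_gt (Real.exp_pos _)),
        Real.log_mul hΩne (ne_of_gt (Real.exp_pos _)), Real.log_exp, Real.log_exp] at h2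
      linarith
    -- the argument simplifies
    have harg : 1 + 1 / ((-Ω₁ / (κ₂ * (Ω₁ + w))) * κ₂) = (-w) / Ω₁ := by
      field_simp
      ring
    have hlogarg : Real.log (1 + 1 / ((-Ω₁ / (κ₂ * (Ω₁ + w))) * κ₂)) = -(Ω₁ + w) := by
      rw [harg, Real.log_div (by linarith) hΩne]
      linarith
    have heq : (-Ω₁ / (κ₂ * (Ω₁ + w))) *
        Real.log (1 + 1 / ((-Ω₁ / (κ₂ * (Ω₁ + w))) * κ₂)) = Ω₁ / κ₂ := by
      rw [hlogarg]; field_simp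
    refine ⟨hBpos, heq, ?_⟩
    -- uniqueness among positive B
    intro B hB hBeq
    set B' := -Ω₁ / (κ₂ * (Ω₁ + w)) with hB'
    have hB'pos : 0 < B' := hBpos
    have key : ∀ C : ℝ, 0 < C → C * Real.log (1 + 1 / (C * κ₂)) = Ω₁ / κ₂ →
        Real.log (1 + 1 / (C * κ₂)) / (1 / (C * κ₂)) = Ω₁ := by
      intro C hC hCeq
      have hCκ : C * κ₂ ≠ 0 := ne_of_gt (mul_pos hC hκ₂)
      have hCne : C ≠ 0 := ne_of_gt hC
      have hlog : Real.log (1 + 1 / (C * κ₂)) = Ω₁ / κ₂ / C := by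
        rw [eq_div_iff hCne]
        linear_combination hCeq
      rw [hlog]
      field_simp
    have hBkey := key B hB hBeq
    have hB'key := key B' hB'pos (by rw [hB']; exact heq)
    have htB : (0:ℝ) < 1 / (B * κ₂) := by positivity
    have htB' : (0:ℝ) < 1 / (B' * κ₂) := by positivity
    have hteq : 1 / (B * κ₂) = 1 / (B' * κ₂) :=
      anti_logratio.injOn (Set.mem_Ioi.mpr htB) (Set.mem_Ioi.mpr htB')
        (by show Real.log (1 + 1 / (B * κ₂)) / (1 / (B * κ₂)) = _
            rw [hBkey, hB'key])
    field_simp at hteq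
    exact hteq.symm
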